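/- Fix λ > 1.8. Define f(x) = x² Σ_{r=1}^{x²+x} r^{-λ} − x² Σ_{r=1}^{(x+1)²} ((x+1)²+1−r)·r^{-λ} − (x+1)² Σ_{r=1}^{x²−1} (x²−r)·r^{-λ} + 2(x²+x) Σ_{r=1}^{x²+x−1} (x²+x−r)·r^{-λ} − x² Σ_{r=x²+x+1}^{x²+2x+2} r^{-λ}. Then f(x) > 0 for every integer x ≥ 2. -/

import Mathlib

open Finset

section helpers

lemma rpow18_pow5 {r : ℝ} (hr : 0 ≤ r) : (r ^ (1.8:ℝ))^5 = r ^ 9 := by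
  rw [← Real.rpow_natCast (r ^ (1.8:ℝ)) 5, ← Real.rpow_mul hr]
  norm_num

lemma le_rpow18 {r b : ℝ} (hr : 0 ≤ r) (h : b^5 ≤ r^9) : b ≤ r ^ (1.8:ℝ) := by
  refine le_of_pow_le_pow_left₀ (n := 5) (by norm_num) (Real.rpow_nonneg hr _) ?_
  rw [rpow18_pow5 hr]; exact h

lemma rpow18_le {r b : ℝ} (hr : 0 ≤ r) (hb : 0 ≤ b) (h : r^9 ≤ b^5) : r ^ (1.8:ℝ) ≤ b := by
  refine le_of_pow_le_pow_left₀ (n := 5) (by norm_num) hb ?_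
  rw [rpow18_pow5 hr]; exact h

lemma rpow18_pos {r : ℝ} (hr : 0 < r) : 0 < r ^ (1.8:ℝ) := Real.rpow_pos_of_pos hr _

lemma inv_lb {A b : ℝ} (hA : 0 < A) (h : A ≤ b) : 1/b ≤ A⁻¹ := by
  rw [← one_div]; exact one_div_le_one_div_of_le hA h

lemma inv_ub {A b : ℝ} (hb : 0 < b) (h : b ≤ A) : A⁻¹ ≤ 1/b := by
  rw [← one_div]; exact one_div_le_one_div_of_le hb h

lemma cross_key {lam X r : ℝ} (h18 : (1.8:ℝ) ≤ lam) (hr : 1 ≤ r) (hrX : r ≤ X) :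
    X ^ (1.8:ℝ) * r ^ lam ≤ X ^ lam * r ^ (1.8:ℝ) := by
  have hr0 : (0:ℝ) < r := by linarith
  have hX0 : (0:ℝ) < X := by linarith
  have hb : (1:ℝ) ≤ X / r := (one_le_div hr0).2 hrX
  have h := Real.rpow_le_rpow_of_exponent_le hb h18
  rw [Real.div_rpow hX0.le hr0.le, Real.div_rpow hX0.le hr0.le] at h
  have h1 : (0:ℝ) < r ^ (1.8:ℝ) := Real.rpow_pos_of_pos hr0 _
  have h2 : (0:ℝ) < r ^ lam := Real.rpow_pos_of_pos hr0 _
  rw [div_le_div_iff₀ h1 h2] at h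
  linarith

lemma bndA {lam X r : ℝ} (h18 : (1.8:ℝ) ≤ lam) (hr : 1 ≤ r) (hrX : r ≤ X) :
    X ^ (1.8:ℝ) / X ^ lam * (1 / r ^ (1.8:ℝ)) ≤ 1 / r ^ lam := by
  have hr0 : (0:ℝ) < r := by linarith
  have hX0 : (0:ℝ) < X := by linarith
  have h1 : (0:ℝ) < r ^ (1.8:ℝ) := Real.rpow_pos_of_pos hr0 _
  have h2 : (0:ℝ) < r ^ lam := Real.rpow_pos_of_pos hr0 _
  have key := cross_key h18 hr hrX
  rw [div_mul_eq_mul_div, div_le_div_iff₀ (by positivity) h2, mul_one_div,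
    div_mul_eq_mul_div, div_le_iff₀ h1, one_mul]
  linarith

lemma bndB {lam X r : ℝ} (h18 : (1.8:ℝ) ≤ lam) (hX : 1 ≤ X) (hrX : X ≤ r) :
    1 / r ^ lam ≤ X ^ (1.8:ℝ) / X ^ lam * (1 / r ^ (1.8:ℝ)) := by
  have hX0 : (0:ℝ) < X := by linarith
  have hr0 : (0:ℝ) < r := by linarith
  have h1 : (0:ℝ) < r ^ (1.8:ℝ) := Real.rpow_pos_of_pos hr0 _
  have h2 : (0:ℝ) < r ^ lam := Real.rpow_pos_of_pos hr0 _
  have key := cross_key h18 hX hrX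
  rw [div_mul_eq_mul_div, div_le_div_iff₀ h2 (by positivity), mul_one_div,
    div_mul_eq_mul_div, le_div_iff₀ h1, one_mul]
  linarith

lemma bndEq {lam X : ℝ} (hX : 0 < X) :
    X ^ (1.8:ℝ) / X ^ lam * (1 / X ^ (1.8:ℝ)) = 1 / X ^ lam := by
  have h1 : (0:ℝ) < X ^ (1.8:ℝ) := Real.rpow_pos_of_pos hX _
  have h2 : (0:ℝ) < X ^ lam := Real.rpow_pos_of_pos hX _
  field_simp

lemma sing (f : ℕ → ℝ) (k : ℕ) : ∑ r ∈ Ioc k (k+1), f r = f (k+1) := by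
  rw [Nat.Ioc_succ_singleton, Finset.sum_singleton]

lemma icc_ioc (n : ℕ) : Finset.Icc 1 n = Finset.Ioc 0 n := by
  rw [← Finset.Icc_add_one_left_eq_Ioc, zero_add]

lemma rpow02_pow5 {a : ℝ} (ha : 0 ≤ a) : (a ^ (0.2:ℝ))^5 = a := by
  rw [← Real.rpow_natCast (a ^ (0.2:ℝ)) 5, ← Real.rpow_mul ha]
  norm_num

lemma sumP : ∀ M : ℕ, 5*(((M+1:ℕ):ℝ)^(0.2:ℝ) - 1) ≤ ∑ r ∈ Ioc 0 M, (r:ℝ)*(1/(r:ℝ)^(1.8:ℝ)) := by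
  intro M
  induction M with
  | zero => simp [Real.one_rpow]
  | succ k ih =>
    rw [Finset.sum_Ioc_succ_top (Nat.zero_le _)]
    have hz1 : (1:ℝ) ≤ ((k+1:ℕ):ℝ) := by exact_mod_cast Nat.succ_le_succ (Nat.zero_le k)
    set z : ℝ := ((k+1:ℕ):ℝ) with hzdef
    have hz0 : (0:ℝ) < z := by linarith
    have hzz : z ^ (0.2:ℝ) * z ^ (1.8:ℝ) = z^2 := by
      rw [← Real.rpow_add hz0, show (0.2:ℝ)+(1.8:ℝ) = ((2:ℕ):ℝ) by norm_num, Real.rpow_natCast]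
    have h18pos : (0:ℝ) < z ^ (1.8:ℝ) := Real.rpow_pos_of_pos hz0 _
    have h02pos : (0:ℝ) < z ^ (0.2:ℝ) := Real.rpow_pos_of_pos hz0 _
    have hdiv : z*(1/z^(1.8:ℝ)) = z^(0.2:ℝ)/z := by
      rw [eq_div_iff (by linarith)]
      field_simp
      nlinarith [hzz]
    have bern : (z+1) ≤ (z^(0.2:ℝ)*(1+1/(5*z)))^5 := by
      have hb : (z^(0.2:ℝ)*(1+1/(5*z)))^5 = z*(1+1/(5*z))^5 := by
        rw [mul_pow, rpow02_pow5 hz0.le]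
      rw [hb]
      have ht : (0:ℝ) ≤ 1/(5*z) := by positivity
      have h15 := one_add_mul_le_pow (a := 1/(5*z)) (by linarith) 5
      push_cast at h15
      have h5z : z*(1+5*(1/(5*z))) = z+1 := by field_simp
      nlinarith [h15, hz0]
    have key : (z+1)^(0.2:ℝ) ≤ z^(0.2:ℝ)*(1+1/(5*z)) := by
      refine le_of_pow_le_pow_left₀ (n := 5) (by norm_num) (by positivity) ?_
      rw [rpow02_pow5 (by linarith)]
      exact bern
    have expand : z^(0.2:ℝ)*(1+1/(5*z)) = z^(0.2:ℝ) + (z^(0.2:ℝ)/z)/5 := by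
      field_simp
    have cast1 : ((k+1+1:ℕ):ℝ) = z + 1 := by push_cast [hzdef]; ring
    calc 5*(((k+1+1:ℕ):ℝ)^(0.2:ℝ) - 1) = 5*((z+1)^(0.2:ℝ) - 1) := by rw [cast1]
      _ ≤ 5*(z^(0.2:ℝ) + (z^(0.2:ℝ)/z)/5 - 1) := by nlinarith [key, expand]
      _ = 5*(z^(0.2:ℝ) - 1) + z^(0.2:ℝ)/z := by ring
      _ ≤ (∑ r ∈ Ioc 0 k, (r:ℝ)*(1/(r:ℝ)^(1.8:ℝ))) + ((k+1:ℕ):ℝ)*(1/((k+1:ℕ):ℝ)^(1.8:ℝ)) := by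
          rw [show ((k+1:ℕ):ℝ)*(1/((k+1:ℕ):ℝ)^(1.8:ℝ)) = z*(1/z^(1.8:ℝ)) by rw [hzdef], hdiv]
          exact add_le_add ih le_rfl

lemma sum_lin (a : ℕ) (A B : ℝ) : ∀ k : ℕ, ∑ r ∈ Ioc a (a+k), (A + B*(r:ℝ))
    = k*A + B*(k*(a:ℝ)) + B*(k*(k+1)/2) := by
  intro k
  induction k with
  | zero => simp
  | succ n ih =>
    rw [show a+(n+1) = (a+n)+1 by omega, Finset.sum_Ioc_succ_top (by omega), ih]
    push_cast
    ring

set_option maxHeartbeats 4000000 in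
lemma Bpos (x M : ℕ) (hx : 2 ≤ x) (hm : x^2 = M+1) :
    0 < (∑ r ∈ Ioc 0 M, (r:ℝ)*(1/(r:ℝ)^(1.8:ℝ)))
      + (x:ℝ)^2*(1/(((x:ℝ)^2))^(1.8:ℝ))
      + (∑ r ∈ Ioc (M+1) (M+x), (0 - (x:ℝ)*((x:ℝ)+2)*((r:ℝ)-(x:ℝ)^2))*(1/(r:ℝ)^(1.8:ℝ)))
      - (x:ℝ)^2*((x:ℝ)+1)*(1/((x:ℝ)^2+(x:ℝ))^(1.8:ℝ))
      - (∑ r ∈ Ioc (M+x+1) (M+2*x+2), ((x:ℝ)^2*((x:ℝ)^2+2*(x:ℝ)+3-(r:ℝ)))*(1/(r:ℝ)^(1.8:ℝ)))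
      - (x:ℝ)^2*(1/((x:ℝ)^2+2*(x:ℝ)+2)^(1.8:ℝ)) := by
  rcases Nat.lt_or_ge x 4 with hx4 | hx4
  · -- x = 2 or x = 3
    interval_cases x
    · -- x = 2, M = 3
      obtain rfl : M = 3 := by omega
      rw [show (Ioc (0:ℕ) 3 : Finset ℕ) = {1,2,3} by decide,
          show (Ioc (3+1:ℕ) (3+2) : Finset ℕ) = {5} by decide,
          show (Ioc (3+2+1:ℕ) (3+2*2+2) : Finset ℕ) = {7,8,9} by decide]
      rw [Finset.sum_insert (by decide), Finset.sum_insert (by decide), Finset.sum_singleton,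
          Finset.sum_singleton, Finset.sum_insert (by decide), Finset.sum_insert (by decide),
          Finset.sum_singleton]
      push_cast
      norm_num
      rw [show ((9:ℝ)/5) = (1.8:ℝ) by norm_num]
      have u2 : ((2:ℝ))^(1.8:ℝ) ≤ 3.49 := rpow18_le (by norm_num) (by norm_num) (by norm_num)
      have u3 : ((3:ℝ))^(1.8:ℝ) ≤ 7.23 := rpow18_le (by norm_num) (by norm_num) (by norm_num)
      have u4 : ((4:ℝ))^(1.8:ℝ) ≤ 12.13 := rpow18_le (by norm_num) (by norm_num) (by norm_num)
      have l5 : (18.11:ℝ) ≤ ((5:ℝ))^(1.8:ℝ) := le_rpow18 (by norm_num) (by norm_num)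
      have l6 : (25.15:ℝ) ≤ ((6:ℝ))^(1.8:ℝ) := le_rpow18 (by norm_num) (by norm_num)
      have l7 : (33.19:ℝ) ≤ ((7:ℝ))^(1.8:ℝ) := le_rpow18 (by norm_num) (by norm_num)
      have l8 : (42.2:ℝ) ≤ ((8:ℝ))^(1.8:ℝ) := le_rpow18 (by norm_num) (by norm_num)
      have l9 : (52.19:ℝ) ≤ ((9:ℝ))^(1.8:ℝ) := le_rpow18 (by norm_num) (by norm_num)
      have l10 : (63:ℝ) ≤ ((10:ℝ))^(1.8:ℝ) := le_rpow18 (by norm_num) (by norm_num)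
      have i2 := inv_lb (rpow18_pos (by norm_num : (0:ℝ) < 2)) u2
      have i3 := inv_lb (rpow18_pos (by norm_num : (0:ℝ) < 3)) u3
      have i4 := inv_lb (rpow18_pos (by norm_num : (0:ℝ) < 4)) u4
      have i5 := inv_ub (by norm_num : (0:ℝ) < 18.11) l5
      have i6 := inv_ub (by norm_num : (0:ℝ) < 25.15) l6
      have i7 := inv_ub (by norm_num : (0:ℝ) < 33.19) l7
      have i8 := inv_ub (by norm_num : (0:ℝ) < 42.2) l8
      have i9 := inv_ub (by norm_num : (0:ℝ) < 52.19) l9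
      have i10 := inv_ub (by norm_num : (0:ℝ) < 63) l10
      nlinarith [i2,i3,i4,i5,i6,i7,i8,i9,i10]
    · -- x = 3, M = 8
      obtain rfl : M = 8 := by omega
      rw [show (Ioc (0:ℕ) 8 : Finset ℕ) = {1,2,3,4,5,6,7,8} by decide,
          show (Ioc (8+1:ℕ) (8+3) : Finset ℕ) = {10,11} by decide,
          show (Ioc (8+3+1:ℕ) (8+2*3+2) : Finset ℕ) = {13,14,15,16} by decide]
      repeat rw [Finset.sum_insert (by decide)]
      rw [Finset.sum_singleton, Finset.sum_singleton, Finset.sum_singleton]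
      push_cast
      norm_num
      rw [show ((9:ℝ)/5) = (1.8:ℝ) by norm_num]
      have u2 : ((2:ℝ))^(1.8:ℝ) ≤ 3.49 := rpow18_le (by norm_num) (by norm_num) (by norm_num)
      have u3 : ((3:ℝ))^(1.8:ℝ) ≤ 7.23 := rpow18_le (by norm_num) (by norm_num) (by norm_num)
      have u4 : ((4:ℝ))^(1.8:ℝ) ≤ 12.13 := rpow18_le (by norm_num) (by norm_num) (by norm_num)
      have u5 : ((5:ℝ))^(1.8:ℝ) ≤ 18.12 := rpow18_le (by norm_num) (by norm_num) (by norm_num)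
      have u6 : ((6:ℝ))^(1.8:ℝ) ≤ 25.16 := rpow18_le (by norm_num) (by norm_num) (by norm_num)
      have u7 : ((7:ℝ))^(1.8:ℝ) ≤ 33.21 := rpow18_le (by norm_num) (by norm_num) (by norm_num)
      have u8 : ((8:ℝ))^(1.8:ℝ) ≤ 42.23 := rpow18_le (by norm_num) (by norm_num) (by norm_num)
      have u9 : ((9:ℝ))^(1.8:ℝ) ≤ 52.21 := rpow18_le (by norm_num) (by norm_num) (by norm_num)
      have l10 : (63:ℝ) ≤ ((10:ℝ))^(1.8:ℝ) := le_rpow18 (by norm_num) (by norm_num)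
      have l11 : (74:ℝ) ≤ ((11:ℝ))^(1.8:ℝ) := le_rpow18 (by norm_num) (by norm_num)
      have l12 : (87:ℝ) ≤ ((12:ℝ))^(1.8:ℝ) := le_rpow18 (by norm_num) (by norm_num)
      have l13 : (101:ℝ) ≤ ((13:ℝ))^(1.8:ℝ) := le_rpow18 (by norm_num) (by norm_num)
      have l14 : (115:ℝ) ≤ ((14:ℝ))^(1.8:ℝ) := le_rpow18 (by norm_num) (by norm_num)
      have l15 : (130:ℝ) ≤ ((15:ℝ))^(1.8:ℝ) := le_rpow18 (by norm_num) (by norm_num)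
      have l16 : (146:ℝ) ≤ ((16:ℝ))^(1.8:ℝ) := le_rpow18 (by norm_num) (by norm_num)
      have l17 : (163:ℝ) ≤ ((17:ℝ))^(1.8:ℝ) := le_rpow18 (by norm_num) (by norm_num)
      have i2 := inv_lb (rpow18_pos (by norm_num : (0:ℝ) < 2)) u2
      have i3 := inv_lb (rpow18_pos (by norm_num : (0:ℝ) < 3)) u3
      have i4 := inv_lb (rpow18_pos (by norm_num : (0:ℝ) < 4)) u4
      have i5 := inv_lb (rpow18_pos (by norm_num : (0:ℝ) < 5)) u5
      have i6 := inv_lb (rpow18_pos (by norm_num : (0:ℝ) < 6)) u6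
      have i7 := inv_lb (rpow18_pos (by norm_num : (0:ℝ) < 7)) u7
      have i8 := inv_lb (rpow18_pos (by norm_num : (0:ℝ) < 8)) u8
      have i9 := inv_lb (rpow18_pos (by norm_num : (0:ℝ) < 9)) u9
      have i10 := inv_ub (by norm_num : (0:ℝ) < 63) l10
      have i11 := inv_ub (by norm_num : (0:ℝ) < 74) l11
      have i12 := inv_ub (by norm_num : (0:ℝ) < 87) l12
      have i13 := inv_ub (by norm_num : (0:ℝ) < 101) l13
      have i14 := inv_ub (by norm_num : (0:ℝ) < 115) l14
      have i15 := inv_ub (by norm_num : (0:ℝ) < 130) l15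
      have i16 := inv_ub (by norm_num : (0:ℝ) < 146) l16
      have i17 := inv_ub (by norm_num : (0:ℝ) < 163) l17
      nlinarith [i2,i3,i4,i5,i6,i7,i8,i9,i10,i11,i12,i13,i14,i15,i16,i17]
  · -- general case x ≥ 4
    have hy4 : (4:ℝ) ≤ (x:ℝ) := by exact_mod_cast hx4
    have hy0 : (0:ℝ) < (x:ℝ) := by linarith
    have hMr : (M:ℝ) + 1 = (x:ℝ)^2 := by
      have := congrArg (fun n : ℕ => (n:ℝ)) hm
      push_cast at this; linarith
    set y : ℝ := (x:ℝ) with hydef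
    have hnn : (0:ℝ) ≤ y^2+y := by nlinarith
    have hpos2 : (0:ℝ) < y^2 := by nlinarith
    have hposn : (0:ℝ) < y^2+y := by nlinarith
    have hW : (y^2)^(1.8:ℝ) = y^(1.6:ℝ) * y^2 := by
      rw [← Real.rpow_natCast y 2, ← Real.rpow_mul hy0.le, ← Real.rpow_add hy0]
      norm_num
    have h16 : (y^2)^(0.8:ℝ) = y^(1.6:ℝ) := by
      rw [← Real.rpow_natCast y 2, ← Real.rpow_mul hy0.le]
      norm_num
    have hZ : y^(1.6:ℝ)*(y^2+y) ≤ (y^2+y)^(1.8:ℝ) := by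
      have hs : (y^2+y)^(0.8:ℝ)*(y^2+y)^(1:ℝ) = (y^2+y)^(1.8:ℝ) := by
        rw [← Real.rpow_add hposn]; norm_num
      have hmono : y^(1.6:ℝ) ≤ (y^2+y)^(0.8:ℝ) := by
        rw [← h16]
        exact Real.rpow_le_rpow (by positivity) (by nlinarith) (by norm_num)
      calc y^(1.6:ℝ)*(y^2+y) ≤ (y^2+y)^(0.8:ℝ)*(y^2+y) :=
            mul_le_mul_of_nonneg_right hmono hnn
        _ = (y^2+y)^(1.8:ℝ) := by rw [← hs, Real.rpow_one]
    have huv : y^(0.4:ℝ) * y^(1.6:ℝ) = y^2 := by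
      rw [← Real.rpow_add hy0, ← Real.rpow_natCast y 2]
      norm_num
    have hv0 : (0:ℝ) < y^(1.6:ℝ) := Real.rpow_pos_of_pos hy0 _
    have hu0 : (0:ℝ) < y^(0.4:ℝ) := Real.rpow_pos_of_pos hy0 _
    have hu174 : (1.74:ℝ) ≤ y^(0.4:ℝ) := by
      refine le_of_pow_le_pow_left₀ (n := 5) (by norm_num) hu0.le ?_
      have h5 : (y^(0.4:ℝ))^5 = y^2 := by
        rw [← Real.rpow_natCast (y^(0.4:ℝ)) 5, ← Real.rpow_mul hy0.le, ← Real.rpow_natCast y 2]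
        norm_num
      rw [h5]; nlinarith
    have hp1 : 5*(y^(0.4:ℝ) - 1) ≤ ∑ r ∈ Ioc 0 M, (r:ℝ)*(1/(r:ℝ)^(1.8:ℝ)) := by
      have := sumP M
      have hc : ((M+1:ℕ):ℝ)^(0.2:ℝ) = y^(0.4:ℝ) := by
        have hc1 : ((M+1:ℕ):ℝ) = y^2 := by push_cast; linarith
        rw [hc1, ← Real.rpow_natCast y 2, ← Real.rpow_mul hy0.le]
        norm_num
      rw [hc] at this
      exact this
    have hp2 : y^2*(1/((y^2))^(1.8:ℝ)) = y^2 * (1/(y^(1.6:ℝ)*y^2)) := by rw [hW]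
    have hmid : -(y*(y+2)*((y-1)*y/2) * (1/(y^(1.6:ℝ)*y^2)))
        ≤ ∑ r ∈ Ioc (M+1) (M+x), (0 - y*(y+2)*((r:ℝ)-y^2))*(1/(r:ℝ)^(1.8:ℝ)) := by
      have step1 : ∑ r ∈ Ioc (M+1) (M+x), (0 - y*(y+2)*((r:ℝ)-y^2))*(1/((y^2))^(1.8:ℝ))
          ≤ ∑ r ∈ Ioc (M+1) (M+x), (0 - y*(y+2)*((r:ℝ)-y^2))*(1/(r:ℝ)^(1.8:ℝ)) := by
        apply Finset.sum_le_sum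
        intro r hr
        rw [Finset.mem_Ioc] at hr
        have hrX : y^2 ≤ (r:ℝ) := by
          have : ((M+1:ℕ):ℝ) ≤ (r:ℝ) := by exact_mod_cast Nat.le_of_lt hr.1
          push_cast at this; linarith
        have hr0 : (0:ℝ) < (r:ℝ) := by nlinarith
        have hwle : (1:ℝ)/(r:ℝ)^(1.8:ℝ) ≤ 1/((y^2))^(1.8:ℝ) := by
          apply one_div_le_one_div_of_le (Real.rpow_pos_of_pos hpos2 _)
          exact Real.rpow_le_rpow hpos2.le hrX (by norm_num)
        have hcneg : (0:ℝ) - y*(y+2)*((r:ℝ)-y^2) ≤ 0 := by nlinarith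
        exact mul_le_mul_of_nonpos_left hwle hcneg
      have step2 : ∑ r ∈ Ioc (M+1) (M+x), (0 - y*(y+2)*((r:ℝ)-y^2))*(1/((y^2))^(1.8:ℝ))
          = -(y*(y+2)*((y-1)*y/2) * (1/(y^(1.6:ℝ)*y^2))) := by
        rw [← Finset.sum_mul]
        have he : ∑ r ∈ Ioc (M+1) (M+x), (0 - y*(y+2)*((r:ℝ)-y^2))
            = -(y*(y+2)*((y-1)*y/2)) := by
          have hsummand : ∀ r ∈ Ioc (M+1) (M+x), (0 - y*(y+2)*((r:ℝ)-y^2))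
              = (y*(y+2)*y^2 + (-(y*(y+2)))*(r:ℝ)) := by
            intro r _; ring
          rw [Finset.sum_congr rfl hsummand,
            show M+x = (M+1)+(x-1) by omega, sum_lin]
          have hk : ((x-1:ℕ):ℝ) = y-1 := by
            push_cast [Nat.cast_sub (by omega : 1 ≤ x)]; ring
          have ha : ((M+1:ℕ):ℝ) = y^2 := by push_cast; linarith
          push_cast [hk]
          push_cast at ha
          rw [ha]
          ring
        rw [he, hW]; ring
      linarith [step1, le_of_eq step2.symm]
    have hp5 : ∑ r ∈ Ioc (M+x+1) (M+2*x+2), (y^2*(y^2+2*y+3-(r:ℝ)))*(1/(r:ℝ)^(1.8:ℝ))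
        ≤ (y^2*((y+1)*(y+3) - (y+1)*(y+2)/2)) * (1/(y^(1.6:ℝ)*(y^2+y))) := by
      have step1 : ∑ r ∈ Ioc (M+x+1) (M+2*x+2), (y^2*(y^2+2*y+3-(r:ℝ)))*(1/(r:ℝ)^(1.8:ℝ))
          ≤ ∑ r ∈ Ioc (M+x+1) (M+2*x+2), (y^2*(y^2+2*y+3-(r:ℝ)))*(1/((y^2+y))^(1.8:ℝ)) := by
        apply Finset.sum_le_sum
        intro r hr
        rw [Finset.mem_Ioc] at hr
        have hrX : y^2+y ≤ (r:ℝ) := by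
          have : ((M+x+1:ℕ):ℝ) ≤ (r:ℝ) := by exact_mod_cast Nat.le_of_lt hr.1
          push_cast at this; linarith
        have hrup : (r:ℝ) ≤ (M:ℝ)+2*y+2 := by
          have h := hr.2
          have h2 : (r:ℝ) ≤ ((M+2*x+2:ℕ):ℝ) := by exact_mod_cast h
          push_cast at h2
          rw [hydef]; exact h2
        have hcpos : (0:ℝ) ≤ y^2*(y^2+2*y+3-(r:ℝ)) := by nlinarith
        have hwle : (1:ℝ)/(r:ℝ)^(1.8:ℝ) ≤ 1/((y^2+y))^(1.8:ℝ) := by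
          apply one_div_le_one_div_of_le (Real.rpow_pos_of_pos hposn _)
          exact Real.rpow_le_rpow hposn.le hrX (by norm_num)
        exact mul_le_mul_of_nonneg_left hwle hcpos
      have step2 : ∑ r ∈ Ioc (M+x+1) (M+2*x+2), (y^2*(y^2+2*y+3-(r:ℝ)))*(1/((y^2+y))^(1.8:ℝ))
          = (y^2*((y+1)*(y+3) - (y+1)*(y+2)/2)) * (1/((y^2+y))^(1.8:ℝ)) := by
        rw [← Finset.sum_mul]
        congr 1
        have hsummand : ∀ r ∈ Ioc (M+x+1) (M+2*x+2), (y^2*(y^2+2*y+3-(r:ℝ)))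
            = (y^2*(y^2+2*y+3) + (-(y^2))*(r:ℝ)) := by
          intro r _; ring
        rw [Finset.sum_congr rfl hsummand,
          show M+2*x+2 = (M+x+1)+(x+1) by omega, sum_lin]
        have ha : ((M+x+1:ℕ):ℝ) = y^2+y := by push_cast; linarith
        push_cast
        push_cast at ha
        rw [ha, ← hydef]
        ring
      have step3 : (y^2*((y+1)*(y+3) - (y+1)*(y+2)/2)) * (1/((y^2+y))^(1.8:ℝ))
          ≤ (y^2*((y+1)*(y+3) - (y+1)*(y+2)/2)) * (1/(y^(1.6:ℝ)*(y^2+y))) := by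
        apply mul_le_mul_of_nonneg_left _ (by nlinarith)
        exact one_div_le_one_div_of_le (by positivity) hZ
      calc _ ≤ _ := step1
        _ = _ := step2
        _ ≤ _ := step3
    have hp4 : y^2*(y+1)*(1/((y^2+y))^(1.8:ℝ)) ≤ y^2*(y+1)*(1/(y^(1.6:ℝ)*(y^2+y))) := by
      apply mul_le_mul_of_nonneg_left _ (by nlinarith)
      exact one_div_le_one_div_of_le (by positivity) hZ
    have hp6 : y^2*(1/((y^2+2*y+2))^(1.8:ℝ)) ≤ y^2*(1/(y^(1.6:ℝ)*(y^2+y))) := by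
      apply mul_le_mul_of_nonneg_left _ (by positivity)
      have : (y^2+y)^(1.8:ℝ) ≤ (y^2+2*y+2)^(1.8:ℝ) :=
        Real.rpow_le_rpow hposn.le (by nlinarith) (by norm_num)
      exact one_div_le_one_div_of_le (by positivity) (le_trans hZ this)
    set u : ℝ := y^(0.4:ℝ) with hu
    set v : ℝ := y^(1.6:ℝ) with hv
    have hden : (0:ℝ) < 2*v*(y^2+y) := by positivity
    have hEc : (5*(u-1) + y^2*(1/(v*y^2)) + (-(y*(y+2)*((y-1)*y/2) * (1/(v*y^2))))
        - y^2*(y+1)*(1/(v*(y^2+y)))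
        - (y^2*((y+1)*(y+3) - (y+1)*(y+2)/2)) * (1/(v*(y^2+y)))
        - y^2*(1/(v*(y^2+y)))) * (2*v*(y^2+y))
        = 10*u*v*(y^2+y) - 10*v*(y^2+y) + 2*(y^2+y) - y*(y+1)*(y+2)*(y-1)
          - 2*y^2*(y+1) - 2*y^2*((y+1)*(y+3)-(y+1)*(y+2)/2) - 2*y^2 := by
      field_simp
      ring
    have key2 : 0 < 10*u*v*(y^2+y) - 10*v*(y^2+y) + 2*(y^2+y) - y*(y+1)*(y+2)*(y-1)
          - 2*y^2*(y+1) - 2*y^2*((y+1)*(y+3)-(y+1)*(y+2)/2) - 2*y^2 := by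
      have h174v : 1.74*v ≤ y^2 := by nlinarith [huv, hu174, hv0]
      have hprod : 0 ≤ (y^2 - 1.74*v)*(y^2+y) := mul_nonneg (by linarith) hnn
      nlinarith [hprod, huv, hy4, hv0, mul_pos hy0 hy0, sq_nonneg (y-4),
        mul_nonneg (mul_nonneg hy0.le hy0.le) (sub_nonneg.2 hy4),
        mul_nonneg (mul_nonneg (mul_nonneg hy0.le hy0.le) hy0.le) (sub_nonneg.2 hy4)]
    have hE : 0 < 5*(u-1) + y^2*(1/(v*y^2)) + (-(y*(y+2)*((y-1)*y/2) * (1/(v*y^2))))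
        - y^2*(y+1)*(1/(v*(y^2+y)))
        - (y^2*((y+1)*(y+3) - (y+1)*(y+2)/2)) * (1/(v*(y^2+y)))
        - y^2*(1/(v*(y^2+y))) := by
      by_contra hcon
      push_neg at hcon
      have := mul_nonpos_of_nonpos_of_nonneg hcon hden.le
      rw [hEc] at this
      linarith [key2]
    linarith [hp1, hp2.le, hp2.ge, hmid, hp4, hp5, hp6, hE]

end helpers

set_option maxHeartbeats 4000000 in
theorem stmt_13 (lam : ℝ) (hlam : lam > 1.8) (x : ℕ) (hx : 2 ≤ x) :
    (x : ℝ) ^ 2 * (∑ r ∈ Finset.Icc (1 : ℕ) (x ^ 2 + x), 1 / (r : ℝ) ^ lam)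
      - (x : ℝ) ^ 2 * (∑ r ∈ Finset.Icc (1 : ℕ) ((x + 1) ^ 2),
          (((x : ℝ) + 1) ^ 2 + 1 - (r : ℝ)) / (r : ℝ) ^ lam)
      - ((x : ℝ) + 1) ^ 2 * (∑ r ∈ Finset.Icc (1 : ℕ) (x ^ 2 - 1),
          ((x : ℝ) ^ 2 - (r : ℝ)) / (r : ℝ) ^ lam)
      + 2 * ((x : ℝ) ^ 2 + x) * (∑ r ∈ Finset.Icc (1 : ℕ) (x ^ 2 + x - 1),
          ((x : ℝ) ^ 2 + (x : ℝ) - (r : ℝ)) / (r : ℝ) ^ lam)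
      - (x : ℝ) ^ 2 * (∑ r ∈ Finset.Icc (x ^ 2 + x + 1 : ℕ) (x ^ 2 + 2 * x + 2),
          1 / (r : ℝ) ^ lam) > 0 := by
  obtain ⟨M, hm⟩ : ∃ M, x^2 = M+1 := ⟨x^2-1, (Nat.succ_pred_eq_of_pos (by positivity)).symm⟩
  have cm : ((M+1:ℕ):ℝ) = (x:ℝ)^2 := by rw [← hm]; push_cast; ring
  have cn : ((M+x+1:ℕ):ℝ) = (x:ℝ)^2 + x := by push_cast; push_cast at cm; linarith
  have cq : ((M+2*x+3:ℕ):ℝ) = (x:ℝ)^2 + 2*x + 2 := by push_cast; push_cast at cm; linarith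
  have s1 : ∀ f : ℕ → ℝ, ∑ r ∈ Icc 1 (x^2+x), f r
      = (((∑ r ∈ Ioc 0 M, f r) + f (M+1)) + ∑ r ∈ Ioc (M+1) (M+x), f r) + f (M+x+1) := by
    intro f
    rw [icc_ioc, show x^2+x = M+x+1 by omega,
      ← Finset.sum_Ioc_consecutive f (show (0:ℕ) ≤ M+x by omega) (Nat.le_succ _),
      ← Finset.sum_Ioc_consecutive f (show (0:ℕ) ≤ M+1 by omega) (show M+1 ≤ M+x by omega),
      ← Finset.sum_Ioc_consecutive f (show (0:ℕ) ≤ M by omega) (Nat.le_succ _),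
      sing, sing]
  have s2 : ∀ f : ℕ → ℝ, ∑ r ∈ Icc 1 ((x+1)^2), f r
      = ((((∑ r ∈ Ioc 0 M, f r) + f (M+1)) + ∑ r ∈ Ioc (M+1) (M+x), f r) + f (M+x+1))
        + ∑ r ∈ Ioc (M+x+1) (M+2*x+2), f r := by
    intro f
    rw [icc_ioc, show (x+1)^2 = M+2*x+2 by ring_nf; omega,
      ← Finset.sum_Ioc_consecutive f (show (0:ℕ) ≤ M+x+1 by omega) (show M+x+1 ≤ M+2*x+2 by omega),
      ← Finset.sum_Ioc_consecutive f (show (0:ℕ) ≤ M+x by omega) (Nat.le_succ _),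
      ← Finset.sum_Ioc_consecutive f (show (0:ℕ) ≤ M+1 by omega) (show M+1 ≤ M+x by omega),
      ← Finset.sum_Ioc_consecutive f (show (0:ℕ) ≤ M by omega) (Nat.le_succ _),
      sing, sing]
  have s3 : ∀ f : ℕ → ℝ, ∑ r ∈ Icc 1 (x^2-1), f r = ∑ r ∈ Ioc 0 M, f r := by
    intro f; rw [icc_ioc, show x^2-1 = M by omega]
  have s4 : ∀ f : ℕ → ℝ, ∑ r ∈ Icc 1 (x^2+x-1), f r
      = ((∑ r ∈ Ioc 0 M, f r) + f (M+1)) + ∑ r ∈ Ioc (M+1) (M+x), f r := by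
    intro f
    rw [icc_ioc, show x^2+x-1 = M+x by omega,
      ← Finset.sum_Ioc_consecutive f (show (0:ℕ) ≤ M+1 by omega) (show M+1 ≤ M+x by omega),
      ← Finset.sum_Ioc_consecutive f (show (0:ℕ) ≤ M by omega) (Nat.le_succ _),
      sing]
  have s5 : ∀ f : ℕ → ℝ, ∑ r ∈ Icc (x^2+x+1) (x^2+2*x+2), f r
      = (∑ r ∈ Ioc (M+x+1) (M+2*x+2), f r) + f (M+2*x+3) := by
    intro f
    rw [show x^2+x+1 = (M+x+1)+1 by omega, Finset.Icc_add_one_left_eq_Ioc,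
      show x^2+2*x+2 = (M+2*x+2)+1 by omega,
      ← Finset.sum_Ioc_consecutive f (show M+x+1 ≤ M+2*x+2 by omega) (Nat.le_succ _),
      sing]
  have R1 : (x:ℝ)^2 * (∑ r ∈ Ioc 0 M, 1/(r:ℝ)^lam)
      - (x:ℝ)^2 * (∑ r ∈ Ioc 0 M, (((x:ℝ)+1)^2+1-(r:ℝ))/(r:ℝ)^lam)
      - ((x:ℝ)+1)^2 * (∑ r ∈ Ioc 0 M, ((x:ℝ)^2-(r:ℝ))/(r:ℝ)^lam)
      + 2*((x:ℝ)^2+(x:ℝ)) * (∑ r ∈ Ioc 0 M, ((x:ℝ)^2+(x:ℝ)-(r:ℝ))/(r:ℝ)^lam)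
      = ∑ r ∈ Ioc 0 M, (r:ℝ) * (1/(r:ℝ)^lam) := by
    rw [Finset.mul_sum, Finset.mul_sum, Finset.mul_sum, Finset.mul_sum,
      ← Finset.sum_sub_distrib, ← Finset.sum_sub_distrib, ← Finset.sum_add_distrib]
    exact Finset.sum_congr rfl fun r _ => by ring
  have R3 : (x:ℝ)^2 * (∑ r ∈ Ioc (M+1) (M+x), 1/(r:ℝ)^lam)
      - (x:ℝ)^2 * (∑ r ∈ Ioc (M+1) (M+x), (((x:ℝ)+1)^2+1-(r:ℝ))/(r:ℝ)^lam)
      + 2*((x:ℝ)^2+(x:ℝ)) * (∑ r ∈ Ioc (M+1) (M+x), ((x:ℝ)^2+(x:ℝ)-(r:ℝ))/(r:ℝ)^lam)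
      = ∑ r ∈ Ioc (M+1) (M+x), ((x:ℝ)^2 - (x:ℝ)*((x:ℝ)+2)*((r:ℝ)-(x:ℝ)^2)) * (1/(r:ℝ)^lam) := by
    rw [Finset.mul_sum, Finset.mul_sum, Finset.mul_sum,
      ← Finset.sum_sub_distrib, ← Finset.sum_add_distrib]
    exact Finset.sum_congr rfl fun r _ => by ring
  have R5 : (x:ℝ)^2 * (∑ r ∈ Ioc (M+x+1) (M+2*x+2), (((x:ℝ)+1)^2+1-(r:ℝ))/(r:ℝ)^lam)
      + (x:ℝ)^2 * (∑ r ∈ Ioc (M+x+1) (M+2*x+2), 1/(r:ℝ)^lam)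
      = ∑ r ∈ Ioc (M+x+1) (M+2*x+2), ((x:ℝ)^2*((x:ℝ)^2+2*(x:ℝ)+3-(r:ℝ))) * (1/(r:ℝ)^lam) := by
    rw [Finset.mul_sum, Finset.mul_sum, ← Finset.sum_add_distrib]
    exact Finset.sum_congr rfl fun r _ => by ring
  have key : (x : ℝ) ^ 2 * (∑ r ∈ Finset.Icc (1 : ℕ) (x ^ 2 + x), 1 / (r : ℝ) ^ lam)
      - (x : ℝ) ^ 2 * (∑ r ∈ Finset.Icc (1 : ℕ) ((x + 1) ^ 2),
          (((x : ℝ) + 1) ^ 2 + 1 - (r : ℝ)) / (r : ℝ) ^ lam)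
      - ((x : ℝ) + 1) ^ 2 * (∑ r ∈ Finset.Icc (1 : ℕ) (x ^ 2 - 1),
          ((x : ℝ) ^ 2 - (r : ℝ)) / (r : ℝ) ^ lam)
      + 2 * ((x : ℝ) ^ 2 + x) * (∑ r ∈ Finset.Icc (1 : ℕ) (x ^ 2 + x - 1),
          ((x : ℝ) ^ 2 + (x : ℝ) - (r : ℝ)) / (r : ℝ) ^ lam)
      - (x : ℝ) ^ 2 * (∑ r ∈ Finset.Icc (x ^ 2 + x + 1 : ℕ) (x ^ 2 + 2 * x + 2),
          1 / (r : ℝ) ^ lam)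
      = (∑ r ∈ Ioc 0 M, (r:ℝ) * (1/(r:ℝ)^lam))
      + (x:ℝ)^2 * (1/((x:ℝ)^2)^lam)
      + (∑ r ∈ Ioc (M+1) (M+x), ((x:ℝ)^2 - (x:ℝ)*((x:ℝ)+2)*((r:ℝ)-(x:ℝ)^2)) * (1/(r:ℝ)^lam))
      - (x:ℝ)^2*((x:ℝ)+1) * (1/((x:ℝ)^2+(x:ℝ))^lam)
      - (∑ r ∈ Ioc (M+x+1) (M+2*x+2), ((x:ℝ)^2*((x:ℝ)^2+2*(x:ℝ)+3-(r:ℝ))) * (1/(r:ℝ)^lam))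
      - (x:ℝ)^2 * (1/((x:ℝ)^2+2*(x:ℝ)+2)^lam) := by
    rw [s1, s2, s3, s4, s5, cm, cn, cq]
    linear_combination R1 + R3 - R5
  rw [gt_iff_lt, key]
  -- now bound by the lam = 1.8 version
  have h18 : (1.8:ℝ) ≤ lam := le_of_lt hlam
  have hy2 : (2:ℝ) ≤ (x:ℝ) := by exact_mod_cast hx
  have hX1 : (1:ℝ) ≤ (x:ℝ)^2 := by nlinarith
  have hX0 : (0:ℝ) < (x:ℝ)^2 := by nlinarith
  have hMr : (M:ℝ) + 1 = (x:ℝ)^2 := by push_cast at cm; linarith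
  have hF0 : 0 < ((x:ℝ)^2) ^ (1.8:ℝ) / ((x:ℝ)^2) ^ lam :=
    div_pos (Real.rpow_pos_of_pos hX0 _) (Real.rpow_pos_of_pos hX0 _)
  have h1 : ((x:ℝ)^2) ^ (1.8:ℝ) / ((x:ℝ)^2) ^ lam * (∑ r ∈ Ioc 0 M, (r:ℝ)*(1/(r:ℝ)^(1.8:ℝ)))
      ≤ ∑ r ∈ Ioc 0 M, (r:ℝ) * (1/(r:ℝ)^lam) := by
    rw [Finset.mul_sum]
    apply Finset.sum_le_sum
    intro r hr
    rw [Finset.mem_Ioc] at hr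
    have hr1 : (1:ℝ) ≤ (r:ℝ) := by exact_mod_cast hr.1
    have hrX : (r:ℝ) ≤ (x:ℝ)^2 := by
      have : (r:ℝ) ≤ (M:ℝ) := by exact_mod_cast hr.2
      linarith
    have hb := bndA h18 hr1 hrX
    calc ((x:ℝ)^2) ^ (1.8:ℝ) / ((x:ℝ)^2) ^ lam * ((r:ℝ)*(1/(r:ℝ)^(1.8:ℝ)))
        = (r:ℝ) * (((x:ℝ)^2) ^ (1.8:ℝ) / ((x:ℝ)^2) ^ lam * (1/(r:ℝ)^(1.8:ℝ))) := by ring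
      _ ≤ (r:ℝ) * (1/(r:ℝ)^lam) := mul_le_mul_of_nonneg_left hb (by positivity)
  have h2 : ((x:ℝ)^2) ^ (1.8:ℝ) / ((x:ℝ)^2) ^ lam * ((x:ℝ)^2*(1/((x:ℝ)^2)^(1.8:ℝ)))
      = (x:ℝ)^2 * (1/((x:ℝ)^2)^lam) := by
    rw [show ((x:ℝ)^2) ^ (1.8:ℝ) / ((x:ℝ)^2) ^ lam * ((x:ℝ)^2*(1/((x:ℝ)^2)^(1.8:ℝ)))
      = (x:ℝ)^2 * (((x:ℝ)^2) ^ (1.8:ℝ) / ((x:ℝ)^2) ^ lam * (1/((x:ℝ)^2)^(1.8:ℝ))) by ring,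
      bndEq hX0]
  have h3 : ((x:ℝ)^2) ^ (1.8:ℝ) / ((x:ℝ)^2) ^ lam
        * (∑ r ∈ Ioc (M+1) (M+x), (0 - (x:ℝ)*((x:ℝ)+2)*((r:ℝ)-(x:ℝ)^2))*(1/(r:ℝ)^(1.8:ℝ)))
      ≤ ∑ r ∈ Ioc (M+1) (M+x), ((x:ℝ)^2 - (x:ℝ)*((x:ℝ)+2)*((r:ℝ)-(x:ℝ)^2)) * (1/(r:ℝ)^lam) := by
    rw [Finset.mul_sum]
    apply Finset.sum_le_sum
    intro r hr
    rw [Finset.mem_Ioc] at hr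
    have hrX : (x:ℝ)^2 ≤ (r:ℝ) := by
      have : ((M+1+1:ℕ):ℝ) ≤ (r:ℝ) := by exact_mod_cast hr.1
      push_cast at this; linarith
    have hb := bndB h18 hX1 hrX
    have hd : 0 ≤ (x:ℝ)*((x:ℝ)+2)*((r:ℝ)-(x:ℝ)^2) := by nlinarith
    have ha0 : (0:ℝ) ≤ 1/(r:ℝ)^lam := by positivity
    have hmm := mul_le_mul_of_nonneg_left hb hd
    have hyw : (0:ℝ) ≤ (x:ℝ)^2 * (1/(r:ℝ)^lam) := by positivity
    nlinarith [hmm, hyw]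
  have h4 : (x:ℝ)^2*((x:ℝ)+1) * (1/((x:ℝ)^2+(x:ℝ))^lam)
      ≤ ((x:ℝ)^2) ^ (1.8:ℝ) / ((x:ℝ)^2) ^ lam * ((x:ℝ)^2*((x:ℝ)+1)*(1/((x:ℝ)^2+(x:ℝ))^(1.8:ℝ))) := by
    have hb := bndB h18 hX1 (show (x:ℝ)^2 ≤ (x:ℝ)^2+(x:ℝ) by nlinarith)
    calc (x:ℝ)^2*((x:ℝ)+1) * (1/((x:ℝ)^2+(x:ℝ))^lam)
        ≤ (x:ℝ)^2*((x:ℝ)+1) * (((x:ℝ)^2) ^ (1.8:ℝ) / ((x:ℝ)^2) ^ lam * (1/((x:ℝ)^2+(x:ℝ))^(1.8:ℝ))) :=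
          mul_le_mul_of_nonneg_left hb (by positivity)
      _ = ((x:ℝ)^2) ^ (1.8:ℝ) / ((x:ℝ)^2) ^ lam * ((x:ℝ)^2*((x:ℝ)+1)*(1/((x:ℝ)^2+(x:ℝ))^(1.8:ℝ))) := by ring
  have h5 : (∑ r ∈ Ioc (M+x+1) (M+2*x+2), ((x:ℝ)^2*((x:ℝ)^2+2*(x:ℝ)+3-(r:ℝ))) * (1/(r:ℝ)^lam))
      ≤ ((x:ℝ)^2) ^ (1.8:ℝ) / ((x:ℝ)^2) ^ lam
        * (∑ r ∈ Ioc (M+x+1) (M+2*x+2), ((x:ℝ)^2*((x:ℝ)^2+2*(x:ℝ)+3-(r:ℝ)))*(1/(r:ℝ)^(1.8:ℝ))) := by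
    rw [Finset.mul_sum]
    apply Finset.sum_le_sum
    intro r hr
    rw [Finset.mem_Ioc] at hr
    have hrX : (x:ℝ)^2 ≤ (r:ℝ) := by
      have : ((M+x+1+1:ℕ):ℝ) ≤ (r:ℝ) := by exact_mod_cast hr.1
      push_cast at this; linarith
    have hrup : (r:ℝ) ≤ (M:ℝ)+2*(x:ℝ)+2 := by
      have h2' : (r:ℝ) ≤ ((M+2*x+2:ℕ):ℝ) := by exact_mod_cast hr.2
      push_cast at h2'; linarith
    have hc : 0 ≤ (x:ℝ)^2*((x:ℝ)^2+2*(x:ℝ)+3-(r:ℝ)) := by nlinarith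
    have hb := bndB h18 hX1 hrX
    calc ((x:ℝ)^2*((x:ℝ)^2+2*(x:ℝ)+3-(r:ℝ))) * (1/(r:ℝ)^lam)
        ≤ ((x:ℝ)^2*((x:ℝ)^2+2*(x:ℝ)+3-(r:ℝ))) * (((x:ℝ)^2) ^ (1.8:ℝ) / ((x:ℝ)^2) ^ lam * (1/(r:ℝ)^(1.8:ℝ))) :=
          mul_le_mul_of_nonneg_left hb hc
      _ = ((x:ℝ)^2) ^ (1.8:ℝ) / ((x:ℝ)^2) ^ lam * (((x:ℝ)^2*((x:ℝ)^2+2*(x:ℝ)+3-(r:ℝ)))*(1/(r:ℝ)^(1.8:ℝ))) := by ring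
  have h6 : (x:ℝ)^2 * (1/((x:ℝ)^2+2*(x:ℝ)+2)^lam)
      ≤ ((x:ℝ)^2) ^ (1.8:ℝ) / ((x:ℝ)^2) ^ lam * ((x:ℝ)^2*(1/((x:ℝ)^2+2*(x:ℝ)+2)^(1.8:ℝ))) := by
    have hb := bndB h18 hX1 (show (x:ℝ)^2 ≤ (x:ℝ)^2+2*(x:ℝ)+2 by nlinarith)
    calc (x:ℝ)^2 * (1/((x:ℝ)^2+2*(x:ℝ)+2)^lam)
        ≤ (x:ℝ)^2 * (((x:ℝ)^2) ^ (1.8:ℝ) / ((x:ℝ)^2) ^ lam * (1/((x:ℝ)^2+2*(x:ℝ)+2)^(1.8:ℝ))) :=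
          mul_le_mul_of_nonneg_left hb (by positivity)
      _ = ((x:ℝ)^2) ^ (1.8:ℝ) / ((x:ℝ)^2) ^ lam * ((x:ℝ)^2*(1/((x:ℝ)^2+2*(x:ℝ)+2)^(1.8:ℝ))) := by ring
  have hBpos := Bpos x M hx hm
  have hprod := mul_pos hF0 hBpos
  have expand : ((x:ℝ)^2) ^ (1.8:ℝ) / ((x:ℝ)^2) ^ lam * ((∑ r ∈ Ioc 0 M, (r:ℝ)*(1/(r:ℝ)^(1.8:ℝ)))
      + (x:ℝ)^2*(1/(((x:ℝ)^2))^(1.8:ℝ))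
      + (∑ r ∈ Ioc (M+1) (M+x), (0 - (x:ℝ)*((x:ℝ)+2)*((r:ℝ)-(x:ℝ)^2))*(1/(r:ℝ)^(1.8:ℝ)))
      - (x:ℝ)^2*((x:ℝ)+1)*(1/((x:ℝ)^2+(x:ℝ))^(1.8:ℝ))
      - (∑ r ∈ Ioc (M+x+1) (M+2*x+2), ((x:ℝ)^2*((x:ℝ)^2+2*(x:ℝ)+3-(r:ℝ)))*(1/(r:ℝ)^(1.8:ℝ)))
      - (x:ℝ)^2*(1/((x:ℝ)^2+2*(x:ℝ)+2)^(1.8:ℝ)))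
    = ((x:ℝ)^2) ^ (1.8:ℝ) / ((x:ℝ)^2) ^ lam * (∑ r ∈ Ioc 0 M, (r:ℝ)*(1/(r:ℝ)^(1.8:ℝ)))
      + ((x:ℝ)^2) ^ (1.8:ℝ) / ((x:ℝ)^2) ^ lam * ((x:ℝ)^2*(1/(((x:ℝ)^2))^(1.8:ℝ)))
      + ((x:ℝ)^2) ^ (1.8:ℝ) / ((x:ℝ)^2) ^ lam * (∑ r ∈ Ioc (M+1) (M+x), (0 - (x:ℝ)*((x:ℝ)+2)*((r:ℝ)-(x:ℝ)^2))*(1/(r:ℝ)^(1.8:ℝ)))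
      - ((x:ℝ)^2) ^ (1.8:ℝ) / ((x:ℝ)^2) ^ lam * ((x:ℝ)^2*((x:ℝ)+1)*(1/((x:ℝ)^2+(x:ℝ))^(1.8:ℝ)))
      - ((x:ℝ)^2) ^ (1.8:ℝ) / ((x:ℝ)^2) ^ lam * (∑ r ∈ Ioc (M+x+1) (M+2*x+2), ((x:ℝ)^2*((x:ℝ)^2+2*(x:ℝ)+3-(r:ℝ)))*(1/(r:ℝ)^(1.8:ℝ)))
      - ((x:ℝ)^2) ^ (1.8:ℝ) / ((x:ℝ)^2) ^ lam * ((x:ℝ)^2*(1/((x:ℝ)^2+2*(x:ℝ)+2)^(1.8:ℝ))) := by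
    ring
  rw [expand] at hprod
  linarith [h1, h2, h3, h4, h5, h6, hprod]
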